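/- Let A be an n×n stable matrix (eigenvalues of positive real part), B an n×1 column and C a 1×n row, with φ(x) = C e^{-xA} B. Define R_x = ∫_x^∞ e^{-yA} B C e^{-yA} dy, an n×n matrix. Suppose I + λ R_x is invertible for all x > 0, and set T_λ(x,y) = −λ C e^{-xA}(I + λ R_x)^{-1} e^{-yA} B. Then T_λ solves the Gelfand–Levitan equation T_λ(x,y) + λ φ(x+y) + λ ∫_x^∞ T_λ(x,z) φ(z+y) dz = 0 for 0 < x < y. -/

import Mathlib

open MeasureTheory Matrix NormedSpace Set

open Filter Asymptotics

namespace Stmt13Aux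

lemma exp_mulVec_eq {n : ℕ} (N : Matrix (Fin n) (Fin n) ℂ) (w : Fin n → ℂ) (K : ℕ)
    (h : N ^ K *ᵥ w = 0) (c : ℂ) :
    exp (c • N) *ᵥ w
      = ∑ j ∈ Finset.range K, (((j.factorial : ℂ))⁻¹ * c ^ j) • (N ^ j *ᵥ w) := by
  letI : SeminormedRing (Matrix (Fin n) (Fin n) ℂ) := Matrix.linftyOpSemiNormedRing
  letI : NormedRing (Matrix (Fin n) (Fin n) ℂ) := Matrix.linftyOpNormedRing
  letI : NormedAlgebra ℂ (Matrix (Fin n) (Fin n) ℂ) := Matrix.linftyOpNormedAlgebra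
  let L : Matrix (Fin n) (Fin n) ℂ →ₗ[ℂ] (Fin n → ℂ) :=
    { toFun := fun P => P *ᵥ w
      map_add' := fun P Q => Matrix.add_mulVec P Q w
      map_smul' := fun r P => Matrix.smul_mulVec r P w }
  have hLcont : Continuous L := L.continuous_of_finiteDimensional
  have hsum : Summable fun j : ℕ => ((j.factorial : ℂ))⁻¹ • (c • N) ^ j :=
    expSeries_summable' (𝕂 := ℂ) (c • N)
  have h1 : HasSum (fun j : ℕ => L (((j.factorial : ℂ))⁻¹ • (c • N) ^ j)) (L (exp (c • N))) := by
    rw [exp_eq_tsum ℂ]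
    exact hsum.hasSum.map L hLcont
  have hfun : ∀ j : ℕ, L (((j.factorial : ℂ))⁻¹ • (c • N) ^ j)
      = (((j.factorial : ℂ))⁻¹ * c ^ j) • (N ^ j *ᵥ w) := by
    intro j
    show (((j.factorial : ℂ))⁻¹ • (c • N) ^ j) *ᵥ w = _
    rw [smul_pow, smul_smul, Matrix.smul_mulVec]
  have hzero : ∀ j ∉ Finset.range K, (((j.factorial : ℂ))⁻¹ * c ^ j) • (N ^ j *ᵥ w) = 0 := by
    intro j hj
    rw [Finset.mem_range, not_lt] at hj
    have : N ^ j *ᵥ w = 0 := by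
      have : N ^ j = N ^ (j - K) * N ^ K := by rw [← pow_add]; congr 1; omega
      rw [this, ← Matrix.mulVec_mulVec, h, Matrix.mulVec_zero]
    rw [this, smul_zero]
  have h2 : HasSum (fun j : ℕ => (((j.factorial : ℂ))⁻¹ * c ^ j) • (N ^ j *ᵥ w))
      (L (exp (c • N))) := by
    simpa only [hfun] using h1
  have := h2.tsum_eq
  rw [tsum_eq_sum hzero] at this
  exact this.symm

/-- the scalar splitting of the exponential -/
lemma exp_split {n : ℕ} (M : Matrix (Fin n) (Fin n) ℂ) (μ : ℂ) (c : ℂ) :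
    exp (c • M) = Complex.exp (c * μ) • exp (c • (M - μ • 1)) := by
  letI : SeminormedRing (Matrix (Fin n) (Fin n) ℂ) := Matrix.linftyOpSemiNormedRing
  letI : NormedRing (Matrix (Fin n) (Fin n) ℂ) := Matrix.linftyOpNormedRing
  letI : NormedAlgebra ℂ (Matrix (Fin n) (Fin n) ℂ) := Matrix.linftyOpNormedAlgebra
  have hsplit : c • M = (c * μ) • (1 : Matrix (Fin n) (Fin n) ℂ) + c • (M - μ • 1) := by
    rw [smul_sub, smul_smul]
    abel
  rw [hsplit, Matrix.exp_add_of_commute]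
  · have h1 : ((c * μ) • (1 : Matrix (Fin n) (Fin n) ℂ)) = algebraMap ℂ _ (c * μ) := by
      rw [Algebra.algebraMap_eq_smul_one]
    erw [h1, ← algebraMap_exp_comm (c * μ)]
    rw [Algebra.algebraMap_eq_smul_one, smul_mul_assoc, one_mul,
      Complex.exp_eq_exp_ℂ]
  · exact ((Commute.one_left _).smul_left _).smul_right _

/-- per-term asymptotic bound -/
lemma term_bigO {n : ℕ} (M : Matrix (Fin n) (Fin n) ℂ) (μ : ℂ) (hμ : 0 < μ.re)
    (w : Fin n → ℂ) (K : ℕ) (hK : (M - μ • 1) ^ K *ᵥ w = 0)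
    (ε : ℝ) (hε : 0 < ε) (hε2 : ε ≤ μ.re / 2) (i : Fin n) :
    (fun z : ℝ => (exp ((-(z : ℂ)) • M) *ᵥ w) i) =O[atTop] fun z => Real.exp (-(ε * z)) := by
  have key : ∀ z : ℝ, (exp ((-(z : ℂ)) • M) *ᵥ w) i
      = ∑ j ∈ Finset.range K,
          Complex.exp ((-(z : ℂ)) * μ) * ((((j.factorial : ℂ))⁻¹ * (-(z : ℂ)) ^ j)
            * (((M - μ • 1) ^ j *ᵥ w) i)) := by
    intro z
    rw [exp_split M μ (-(z : ℂ)), Matrix.smul_mulVec,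
      exp_mulVec_eq (M - μ • 1) w K hK (-(z : ℂ))]
    simp [Finset.smul_sum, Finset.sum_apply, mul_assoc, Finset.mul_sum]
  have : (fun z : ℝ => (exp ((-(z : ℂ)) • M) *ᵥ w) i)
      = fun z : ℝ => ∑ j ∈ Finset.range K,
          Complex.exp ((-(z : ℂ)) * μ) * ((((j.factorial : ℂ))⁻¹ * (-(z : ℂ)) ^ j)
            * (((M - μ • 1) ^ j *ᵥ w) i)) := funext key
  rw [this]
  apply Asymptotics.IsBigO.fun_sum
  intro j _
  -- single term
  have hδ : 0 < μ.re - ε := by linarith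
  have hA : (fun z : ℝ => Complex.exp ((-(z : ℂ)) * μ)) =O[atTop]
      fun z : ℝ => Real.exp (-(μ.re * z)) := by
    apply Asymptotics.isBigO_of_le
    intro z
    simp only [Complex.norm_exp, Real.norm_eq_abs, Real.abs_exp]
    apply le_of_eq
    congr 1
    simp [Complex.mul_re]
    ring
  have hB : (fun z : ℝ => (((j.factorial : ℂ))⁻¹ * (-(z : ℂ)) ^ j)
        * (((M - μ • 1) ^ j *ᵥ w) i)) =O[atTop]
      fun z : ℝ => Real.exp ((μ.re - ε) * z) := by
    have h1 : (fun z : ℝ => (((j.factorial : ℂ))⁻¹ * (-(z : ℂ)) ^ j)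
        * (((M - μ • 1) ^ j *ᵥ w) i)) =O[atTop] fun z : ℝ => z ^ j := by
      apply Asymptotics.IsBigO.of_bound (((j.factorial : ℝ))⁻¹ * ‖((M - μ • 1) ^ j *ᵥ w) i‖)
      filter_upwards [eventually_ge_atTop (0 : ℝ)] with z hz
      simp only [norm_mul, norm_inv, norm_pow, norm_neg, Complex.norm_natCast,
        Complex.norm_real, Real.norm_eq_abs, abs_pow, abs_of_nonneg hz]
      ring_nf
      apply le_of_eq
      ring
    calc (fun z : ℝ => (((j.factorial : ℂ))⁻¹ * (-(z : ℂ)) ^ j)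
        * (((M - μ • 1) ^ j *ᵥ w) i)) =O[atTop] fun z : ℝ => z ^ j := h1
      _ =O[atTop] fun z : ℝ => Real.exp ((μ.re - ε) * z) :=
          (isLittleO_pow_exp_pos_mul_atTop j hδ).isBigO
  have hAB := hA.mul hB
  have : (fun z : ℝ => Real.exp (-(μ.re * z)) * Real.exp ((μ.re - ε) * z))
      = fun z : ℝ => Real.exp (-(ε * z)) := by
    funext z
    rw [← Real.exp_add]
    congr 1
    ring
  rw [this] at hAB
  exact hAB

lemma decay {n : ℕ} (M : Matrix (Fin n) (Fin n) ℂ)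
    (hM : ∀ μ ∈ spectrum ℂ M, 0 < μ.re) (v : Fin n → ℂ) :
    ∃ ε : ℝ, 0 < ε ∧ ∀ i : Fin n,
      (fun z : ℝ => (exp ((-(z : ℂ)) • M) *ᵥ v) i) =O[atTop] fun z => Real.exp (-(ε * z)) := by
  classical
  set T := Matrix.toLinAlgEquiv' M with hT
  have hmem : v ∈ ⨆ μ : ℂ, Module.End.maxGenEigenspace T μ := by
    rw [Module.End.iSup_maxGenEigenspace_eq_top]; trivial
  obtain ⟨f, hf, hfv⟩ := (Submodule.mem_iSup_iff_exists_finsupp _ v).mp hmem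
  -- each µ in the support is in the spectrum of M
  have hspec : ∀ μ ∈ f.support, 0 < μ.re := by
    intro μ hμ
    apply hM
    by_contra hcon
    rw [spectrum.notMem_iff] at hcon
    have hunit : IsUnit (M - μ • 1) := by
      have : M - μ • 1 = -(algebraMap ℂ (Matrix (Fin n) (Fin n) ℂ) μ - M) := by
        rw [Algebra.algebraMap_eq_smul_one]; abel
      rw [this]
      exact hcon.neg
    obtain ⟨K, hK⟩ := (Module.End.mem_maxGenEigenspace T μ (f μ)).mp (hf μ)
    have hKm : (M - μ • 1) ^ K *ᵥ (f μ) = 0 := by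
      have h2 : (T - μ • 1) ^ K = Matrix.toLinAlgEquiv' ((M - μ • 1) ^ K) := by
        rw [map_pow, map_sub, _root_.map_smul, _root_.map_one]
      rw [h2] at hK
      exact hK
    have : f μ = 0 := by
      have h3 := congrArg (fun u => ((M - μ • 1) ^ K)⁻¹ *ᵥ u) hKm
      simpa [Matrix.mulVec_mulVec, Matrix.nonsing_inv_mul _
        ((Matrix.isUnit_iff_isUnit_det _).mp (hunit.pow K))] using h3
    exact (Finsupp.mem_support_iff.mp hμ) this
  rcases Finset.eq_empty_or_nonempty f.support with hs | hs
  · -- v = 0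
    have hv0 : v = 0 := by
      rw [← hfv, Finsupp.sum]
      rw [hs]
      simp
    refine ⟨1, one_pos, fun i => ?_⟩
    have : (fun z : ℝ => (exp ((-(z : ℂ)) • M) *ᵥ v) i) = fun _ => (0 : ℂ) := by
      funext z; rw [hv0, Matrix.mulVec_zero]; rfl
    rw [this]
    exact Asymptotics.isBigO_zero _ _
  · set ε : ℝ := (f.support.inf' hs fun μ => μ.re) / 2 with hε
    have hεpos : 0 < ε := by
      have : 0 < f.support.inf' hs fun μ => μ.re := by
        obtain ⟨μ0, hμ0, hmin⟩ := f.support.exists_mem_eq_inf' hs fun μ => μ.re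
        rw [hmin]
        exact hspec μ0 hμ0
      positivity
    refine ⟨ε, hεpos, fun i => ?_⟩
    have hsum : ∀ z : ℝ, (exp ((-(z : ℂ)) • M) *ᵥ v) i
        = ∑ μ ∈ f.support, (exp ((-(z : ℂ)) • M) *ᵥ f μ) i := by
      intro z
      rw [← hfv, Finsupp.sum]
      have h4 : (exp ((-(z : ℂ)) • M)) *ᵥ (∑ μ ∈ f.support, f μ)
          = ∑ μ ∈ f.support, (exp ((-(z : ℂ)) • M)) *ᵥ f μ := by
        simpa only [Matrix.mulVecLin_apply] using
          map_sum (Matrix.mulVecLin (exp ((-(z : ℂ)) • M))) f f.support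
      rw [h4, Finset.sum_apply]
    have : (fun z : ℝ => (exp ((-(z : ℂ)) • M) *ᵥ v) i)
        = fun z : ℝ => ∑ μ ∈ f.support, (exp ((-(z : ℂ)) • M) *ᵥ f μ) i := funext hsum
    rw [this]
    apply Asymptotics.IsBigO.fun_sum
    intro μ hμ
    obtain ⟨K, hK⟩ := (Module.End.mem_maxGenEigenspace T μ (f μ)).mp (hf μ)
    have hKm : (M - μ • 1) ^ K *ᵥ (f μ) = 0 := by
      have h2 : (T - μ • 1) ^ K = Matrix.toLinAlgEquiv' ((M - μ • 1) ^ K) := by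
        rw [map_pow, map_sub, _root_.map_smul, _root_.map_one]
      rw [h2] at hK
      exact hK
    refine term_bigO M μ (hspec μ hμ) (f μ) K hKm ε hεpos ?_ i
    rw [hε]
    have := Finset.inf'_le (fun μ => μ.re) hμ
    linarith

lemma cont_exp {n : ℕ} (M : Matrix (Fin n) (Fin n) ℂ) :
    Continuous fun z : ℝ => exp ((-(z : ℂ)) • M) := by
  letI : SeminormedRing (Matrix (Fin n) (Fin n) ℂ) := Matrix.linftyOpSemiNormedRing
  letI : NormedRing (Matrix (Fin n) (Fin n) ℂ) := Matrix.linftyOpNormedRing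
  letI : NormedAlgebra ℂ (Matrix (Fin n) (Fin n) ℂ) := Matrix.linftyOpNormedAlgebra
  letI : NormedAlgebra ℚ (Matrix (Fin n) (Fin n) ℂ) := NormedAlgebra.restrictScalars ℚ ℂ _
  exact exp_continuous.comp ((Complex.continuous_ofReal.neg).smul continuous_const)

lemma spectrum_transpose {n : ℕ} (M : Matrix (Fin n) (Fin n) ℂ) :
    spectrum ℂ Mᵀ = spectrum ℂ M := by
  ext μ
  simp only [spectrum.mem_iff]
  have h1 : algebraMap ℂ (Matrix (Fin n) (Fin n) ℂ) μ - Mᵀ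
      = (algebraMap ℂ (Matrix (Fin n) (Fin n) ℂ) μ - M)ᵀ := by
    simp only [Algebra.algebraMap_eq_smul_one, Matrix.transpose_sub, Matrix.transpose_smul,
      Matrix.transpose_one]
  rw [h1, Matrix.isUnit_iff_isUnit_det, Matrix.det_transpose, ← Matrix.isUnit_iff_isUnit_det]

lemma int_entry {n : ℕ} (A : Matrix (Fin n) (Fin n) ℂ) (B : Matrix (Fin n) (Fin 1) ℂ)
    (C : Matrix (Fin 1) (Fin n) ℂ) (hA : ∀ μ ∈ spectrum ℂ A, 0 < μ.re) (x : ℝ) (i j : Fin n) :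
    IntegrableOn (fun z : ℝ =>
      (exp ((-(z : ℂ)) • A) * B * C * exp ((-(z : ℂ)) • A)) i j) (Ioi x) := by
  set E : ℝ → Matrix (Fin n) (Fin n) ℂ := fun t => exp ((-(t : ℂ)) • A) with hE
  set bv : Fin n → ℂ := fun k => B k 0 with hbv
  set cv : Fin n → ℂ := fun k => C 0 k with hcv
  have hAt : ∀ μ ∈ spectrum ℂ Aᵀ, 0 < μ.re := by
    rw [spectrum_transpose]; exact hA
  have hEt : ∀ z : ℝ, (E z)ᵀ = exp ((-(z : ℂ)) • Aᵀ) := by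
    intro z
    rw [hE]
    rw [← Matrix.exp_transpose, Matrix.transpose_smul]
  have hfeq : ∀ z : ℝ, (E z * B * C * E z) i j
      = (E z *ᵥ bv) i * ((E z)ᵀ *ᵥ cv) j := by
    intro z
    rw [Matrix.mul_assoc (E z * B) C (E z), show E z * B * (C * E z) = (E z * B) * (C * E z) from rfl]
    rw [Matrix.mul_apply]
    rw [Fin.sum_univ_one]
    congr 1
    all_goals
      simp only [Matrix.mulVec, dotProduct, Matrix.transpose_apply, hcv,
        Matrix.mul_apply, hbv]
    all_goals
      first
      | rfl
      | exact Finset.sum_congr rfl fun k _ => mul_comm _ _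
  obtain ⟨ε₁, hε₁, hb⟩ := decay A hA bv
  obtain ⟨ε₂, hε₂, hc⟩ := decay Aᵀ hAt cv
  -- continuity
  have hcontmat : Continuous fun z : ℝ => E z * B * C * E z := by
    have h1 := cont_exp A
    exact ((h1.matrix_mul continuous_const).matrix_mul continuous_const).matrix_mul h1
  have hcont : Continuous fun z : ℝ => (E z * B * C * E z) i j :=
    (continuous_apply j).comp ((continuous_apply i).comp hcontmat)
  -- big O
  have hO : (fun z : ℝ => (E z * B * C * E z) i j) =O[atTop]
      fun z : ℝ => Real.exp (-(ε₁ + ε₂) * z) := by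
    have h2 : (fun z : ℝ => ((E z)ᵀ *ᵥ cv) j) =O[atTop] fun z => Real.exp (-(ε₂ * z)) := by
      have := hc j
      apply this.congr_left
      intro z
      rw [hEt z]
    have h3 := (hb i).mul h2
    have h4 : (fun z : ℝ => Real.exp (-(ε₁ * z)) * Real.exp (-(ε₂ * z)))
        = fun z : ℝ => Real.exp (-(ε₁ + ε₂) * z) := by
      funext z; rw [← Real.exp_add]; congr 1; ring
    rw [h4] at h3
    apply h3.congr_left
    intro z
    exact (hfeq z).symm
  have key : IntegrableOn (fun z : ℝ => (E z * B * C * E z) i j) (Ici x) := by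
    refine (hcont.continuousOn.locallyIntegrableOn measurableSet_Ici).integrableOn_of_isBigO_atTop
      hO ⟨Ioi 0, Ioi_mem_atTop 0, exp_neg_integrableOn_Ioi 0 (by positivity)⟩
  exact key.mono_set Ioi_subset_Ici_self

lemma integral_entry {n : ℕ} (x : ℝ) (P : Matrix (Fin 1) (Fin n) ℂ) (Q : Matrix (Fin n) (Fin 1) ℂ)
    (G : ℝ → Matrix (Fin n) (Fin n) ℂ) (hG : ∀ i j, IntegrableOn (fun z => G z i j) (Ioi x)) :
    ∫ z in Ioi x, (P * G z * Q) 0 0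
      = (P * (Matrix.of fun i j => ∫ z in Ioi x, G z i j) * Q) 0 0 := by
  have h1 : ∀ z : ℝ, (P * G z * Q) 0 0
      = ∑ j : Fin n, ∑ i : Fin n, P 0 i * (G z i j * Q j 0) := by
    intro z
    simp only [Matrix.mul_apply, Finset.sum_mul, mul_assoc]
  simp only [h1]
  rw [integral_finset_sum]
  · have h2 : ∀ j : Fin n, (∫ z in Ioi x, ∑ i : Fin n, P 0 i * (G z i j * Q j 0))
        = ∑ i : Fin n, P 0 i * ((∫ z in Ioi x, G z i j) * Q j 0) := by
      intro j
      rw [integral_finset_sum]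
      · refine Finset.sum_congr rfl fun i _ => ?_
        rw [MeasureTheory.integral_const_mul, MeasureTheory.integral_mul_const]
      · intro i _
        exact (((hG i j).mul_const _).const_mul _)
    simp only [h2]
    simp only [Matrix.mul_apply, Matrix.of_apply, Finset.sum_mul, mul_assoc]
  · intro j _
    exact integrable_finset_sum _ fun i _ => (((hG i j).mul_const _).const_mul _)

end Stmt13Aux

open Stmt13Aux

lemma exp_ofReal_add {n : ℕ} (A : Matrix (Fin n) (Fin n) ℂ) (s t : ℝ) :
    exp ((-((s + t : ℝ) : ℂ)) • A) = exp ((-(s : ℂ)) • A) * exp ((-(t : ℂ)) • A) := by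
  have h1 : (-((s + t : ℝ) : ℂ)) • A = (-(s : ℂ)) • A + (-(t : ℂ)) • A := by
    push_cast
    rw [← add_smul]
    ring_nf
  rw [h1, Matrix.exp_add_of_commute]
  exact ((Commute.refl A).smul_left _).smul_right _



theorem stmt13 (n : ℕ) (A : Matrix (Fin n) (Fin n) ℂ)
    (B : Matrix (Fin n) (Fin 1) ℂ) (C : Matrix (Fin 1) (Fin n) ℂ)
    (hA : ∀ μ ∈ spectrum ℂ A, 0 < μ.re)
    (lam : ℂ)
    (φ : ℝ → ℂ) (hφ : ∀ x : ℝ, φ x = (C * exp ((-(x : ℂ)) • A) * B) 0 0)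
    (R : ℝ → Matrix (Fin n) (Fin n) ℂ)
    (hR : ∀ x : ℝ, R x = Matrix.of fun i j =>
        ∫ (y : ℝ) in Ioi x,
          (exp ((-(y : ℂ)) • A) * B * C * exp ((-(y : ℂ)) • A)) i j)
    (hinv : ∀ x : ℝ, 0 < x → IsUnit (1 + lam • R x))
    (T : ℝ → ℝ → ℂ)
    (hT : ∀ x y : ℝ, T x y =
      -lam * (C * exp ((-(x : ℂ)) • A) * (1 + lam • R x)⁻¹ *
              exp ((-(y : ℂ)) • A) * B) 0 0) :
    ∀ x y : ℝ, 0 < x → x < y →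
      T x y + lam * φ (x + y) + lam * ∫ (z : ℝ) in Ioi x, T x z * φ (z + y) = 0 := by
  intro x y hx _
  have hdet : IsUnit (1 + lam • R x).det :=
    (Matrix.isUnit_iff_isUnit_det _).mp (hinv x hx)
  set E : ℝ → Matrix (Fin n) (Fin n) ℂ := fun t => exp ((-(t : ℂ)) • A) with hE
  set M' : Matrix (Fin n) (Fin n) ℂ := (1 + lam • R x)⁻¹ with hM'
  have hEdef : ∀ t : ℝ, exp ((-(t : ℂ)) • A) = E t := fun _ => rfl
  have h11 : ∀ (U V : Matrix (Fin 1) (Fin 1) ℂ), U 0 0 * V 0 0 = (U * V) 0 0 := by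
    intro U V; simp [Matrix.mul_apply]
  have hTz : ∀ z : ℝ, T x z * φ (z + y)
      = -lam * ((C * E x * M') * (E z * B * C * E z) * (E y * B)) 0 0 := by
    intro z
    rw [hT x z, hφ (z + y)]
    simp only [hEdef, ← hM']
    rw [show E (z + y) = E z * E y from exp_ofReal_add A z y]
    rw [mul_assoc, h11]
    congr 2
    simp only [Matrix.mul_assoc]
  have hInt : (∫ (z : ℝ) in Ioi x, T x z * φ (z + y))
      = -lam * ((C * E x * M') * (R x) * (E y * B)) 0 0 := by
    simp only [hTz]
    rw [MeasureTheory.integral_const_mul]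
    rw [integral_entry x (C * E x * M') (E y * B) (fun z => E z * B * C * E z)
      (fun i j => int_entry A B C hA x i j)]
    rw [hR x]
  rw [hInt, hT x y, hφ (x + y)]
  simp only [hEdef, ← hM']
  rw [show E (x + y) = E x * E y from exp_ofReal_add A x y]
  have hrel : (C * E x * M') * (1 + lam • R x) = C * E x := by
    rw [Matrix.mul_assoc (C * E x) M' (1 + lam • R x), hM',
      Matrix.nonsing_inv_mul _ hdet, Matrix.mul_one]
  have hrel2 : (C * E x * M') * (E y * B) + lam • ((C * E x * M') * (R x) * (E y * B))
      = (C * E x) * (E y * B) := by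
    have h5 := congrArg (fun Z => Z * (E y * B)) hrel
    simp only [Matrix.add_mul, Matrix.mul_add, Matrix.mul_one, Matrix.mul_smul,
      Matrix.smul_mul, Matrix.mul_assoc] at h5 ⊢
    exact h5
  have hent := congrArg (fun Z => Z 0 0) hrel2
  simp only [Matrix.add_apply, Matrix.smul_apply, smul_eq_mul] at hent
  simp only [Matrix.mul_assoc] at hent ⊢
  linear_combination (-lam) * hent
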